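/- Let G be a countable group containing a normal subgroup H ≠ G such that the quotient G/H is virtually abelian (contains an abelian subgroup of finite index). Then there exists an indecomposable character χ : G → ℂ and an element g ∈ G such that χ(g) is not a nonnegative real number. -/

import Mathlib

open scoped ComplexOrder
open scoped Matrix

/-- A character on a group `G`: central, normalized at the identity, with all matrices
`(χ(g_i g_j⁻¹))` positive semidefinite. -/
def IsCharacter {G : Type*} [Group G] (χ : G → ℂ) : Prop :=
  (∀ a b : G, χ (a * b) = χ (b * a)) ∧ χ 1 = 1 ∧
  ∀ (n : ℕ) (g : Fin n → G),
    (Matrix.of fun i j : Fin n => χ (g i * (g j)⁻¹)).PosSemidef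

/-- An indecomposable character: one that is not a proper convex combination of two distinct
characters. -/
def IsIndecomposableCharacter {G : Type*} [Group G] (χ : G → ℂ) : Prop :=
  IsCharacter χ ∧
  ¬ ∃ (α : ℝ) (χ₁ χ₂ : G → ℂ), 0 < α ∧ α < 1 ∧ IsCharacter χ₁ ∧ IsCharacter χ₂ ∧
      χ₁ ≠ χ₂ ∧ χ = fun g => (α : ℂ) * χ₁ g + ((1 - α : ℝ) : ℂ) * χ₂ g


noncomputable def circChar (x : AddCircle (1 : ℚ)) : ℂ :=
  Quotient.liftOn' x (fun q : ℚ => Complex.exp (2 * Real.pi * Complex.I * q)) (by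
    intro a b h
    rw [QuotientAddGroup.leftRel_apply] at h
    obtain ⟨n, hn⟩ := h
    have hb : (b : ℚ) = a + n := by
      have h2 : (n:ℚ) = -a + b := by simpa using hn
      linarith [h2]
    simp only [hb]
    push_cast
    rw [mul_add, Complex.exp_add]
    have : Complex.exp (2 * Real.pi * Complex.I * (n : ℂ)) = 1 := by
      rw [show (2 * (Real.pi:ℂ) * Complex.I * (n : ℂ)) = (n:ℂ) * (2 * Real.pi * Complex.I) by ring]
      exact Complex.exp_int_mul_two_pi_mul_I n
    rw [this, mul_one])

lemma circChar_coe (q : ℚ) : circChar (q : AddCircle (1:ℚ)) = Complex.exp (2 * Real.pi * Complex.I * q) := rfl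

lemma circChar_zero : circChar 0 = 1 := by
  have : ((0:ℚ) : AddCircle (1:ℚ)) = 0 := by norm_cast
  rw [← this, circChar_coe]; simp

lemma circChar_add (x y : AddCircle (1:ℚ)) : circChar (x + y) = circChar x * circChar y := by
  induction x using QuotientAddGroup.induction_on with
  | H a =>
  induction y using QuotientAddGroup.induction_on with
  | H b =>
  rw [← QuotientAddGroup.mk_add]
  show circChar ((a + b : ℚ) : AddCircle (1:ℚ)) = _
  rw [circChar_coe, circChar_coe, circChar_coe, ← Complex.exp_add]
  push_cast; ring_nf

lemma circChar_neg (x : AddCircle (1:ℚ)) : circChar (-x) = starRingEnd ℂ (circChar x) := by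
  induction x using QuotientAddGroup.induction_on with
  | H a =>
  rw [← QuotientAddGroup.mk_neg]
  show circChar ((-a : ℚ) : AddCircle (1:ℚ)) = _
  rw [circChar_coe, circChar_coe, ← Complex.exp_conj]
  congr 1
  apply Complex.ext <;> simp [Complex.mul_re, Complex.mul_im]

lemma circChar_norm (x : AddCircle (1:ℚ)) : ‖circChar x‖ = 1 := by
  induction x using QuotientAddGroup.induction_on with
  | H a =>
  rw [circChar_coe, Complex.norm_exp]
  have : (2 * (Real.pi:ℂ) * Complex.I * (a:ℚ)).re = 0 := by
    simp [Complex.mul_re, Complex.mul_im]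
  rw [this, Real.exp_zero]

lemma circChar_ne_one {x : AddCircle (1:ℚ)} (hx : x ≠ 0) : circChar x ≠ 1 := by
  induction x using QuotientAddGroup.induction_on with
  | H a =>
  rw [circChar_coe]
  intro h
  rw [Complex.exp_eq_one_iff] at h
  obtain ⟨n, hn⟩ := h
  apply hx
  have ha : (a : ℚ) = n := by
    have h2 : (2 * (Real.pi:ℂ) * Complex.I) ≠ 0 := by
      simp [Real.pi_ne_zero, Complex.I_ne_zero]
    have hn' : (a : ℂ) * (2 * (Real.pi:ℂ) * Complex.I) = (n:ℂ) * (2 * (Real.pi:ℂ) * Complex.I) := by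
      rw [← hn]; ring
    have := mul_right_cancel₀ h2 hn'
    exact_mod_cast this
  rw [ha]
  exact (AddCircle.coe_eq_zero_iff _).mpr ⟨n, by simp⟩

section Hom
variable {G : Type*} [Group G]

/-- A multiplicative map into the unit circle of `ℂ` is a character. -/
lemma isCharacter_of_hom (f : G → ℂ) (hmul : ∀ a b : G, f (a * b) = f a * f b)
    (h1 : f 1 = 1) (hinv : ∀ a : G, f a⁻¹ = starRingEnd ℂ (f a)) : IsCharacter f := by
  refine ⟨fun a b => by rw [hmul, hmul, mul_comm], h1, fun n g => ?_⟩
  set A : Matrix (Fin 1) (Fin n) ℂ := Matrix.of fun (_ : Fin 1) (j : Fin n) => starRingEnd ℂ (f (g j)) with hA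
  have key : (Matrix.of fun i j : Fin n => f (g i * (g j)⁻¹)) = Aᴴ * A := by
    ext i j
    rw [Matrix.mul_apply]
    simp only [Matrix.of_apply, Matrix.conjTranspose_apply, Fin.sum_univ_one]
    rw [hmul, hinv]
    simp [hA, Matrix.of_apply, mul_comm]
  rw [key]
  exact Matrix.posSemidef_conjTranspose_mul_self _

end Hom

section K
variable {G : Type*} [Group G]

lemma char_bound {χ : G → ℂ} (hχ : IsCharacter χ) (g : G) : ‖χ g‖ ≤ 1 := by
  have h := hχ.2.2 2 ![g, 1]
  have hherm := h.1
  have hM10 : (Matrix.of fun i j : Fin 2 => χ (![g,1] i * (![g,1] j)⁻¹)) 1 0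
      = starRingEnd ℂ ((Matrix.of fun i j : Fin 2 => χ (![g,1] i * (![g,1] j)⁻¹)) 0 1) := by
    have := congrFun (congrFun hherm 1) 0
    simpa [Matrix.conjTranspose_apply] using this.symm
  simp only [Matrix.of_apply] at hM10
  norm_num at hM10
  -- hM10 : χ g⁻¹ = conj (χ g)
  have hq := h.dotProduct_mulVec_nonneg ![1, -(starRingEnd ℂ (χ g))]
  have hval : dotProduct (star ![1, -(starRingEnd ℂ (χ g))])
      ((Matrix.of fun i j : Fin 2 => χ (![g,1] i * (![g,1] j)⁻¹)).mulVec
        ![1, -(starRingEnd ℂ (χ g))]) = 1 - χ g * starRingEnd ℂ (χ g) := by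
    simp [dotProduct, Matrix.mulVec, Fin.sum_univ_two, hχ.2.1, hM10]
    ring
  rw [hval] at hq
  have : χ g * starRingEnd ℂ (χ g) = ((Complex.normSq (χ g) : ℝ) : ℂ) := by
    rw [Complex.mul_conj]
  rw [this] at hq
  have h01 : ((Complex.normSq (χ g) : ℝ) : ℂ) ≤ 1 := by
    rwa [le_sub_iff_add_le, zero_add] at hq
  have : Complex.normSq (χ g) ≤ 1 := by
    have := h01
    rw [show (1:ℂ) = ((1:ℝ):ℂ) by norm_num, Complex.real_le_real] at this
    exact this
  rw [← Complex.sq_norm] at this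
  nlinarith [norm_nonneg (χ g)]

lemma isClosed_nonnegC : IsClosed {z : ℂ | 0 ≤ z} := by
  have : {z : ℂ | 0 ≤ z} = Complex.re ⁻¹' Set.Ici 0 ∩ Complex.im ⁻¹' {0} := by
    ext z
    simp [Complex.le_def, eq_comm]
  rw [this]
  exact (isClosed_Ici.preimage Complex.continuous_re).inter
    (isClosed_singleton.preimage Complex.continuous_im)

lemma isClosed_K : IsClosed {χ : G → ℂ | IsCharacter χ} := by
  have : {χ : G → ℂ | IsCharacter χ} =
      (⋂ (a : G) (b : G), {χ : G → ℂ | χ (a*b) = χ (b*a)}) ∩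
      ({χ : G → ℂ | χ 1 = 1} ∩
      ⋂ (n : ℕ) (g : Fin n → G),
        ((⋂ (i : Fin n) (j : Fin n), {χ : G → ℂ | starRingEnd ℂ (χ (g i * (g j)⁻¹)) = χ (g j * (g i)⁻¹)}) ∩
         ⋂ (x : Fin n → ℂ), {χ : G → ℂ |
           (∑ i, starRingEnd ℂ (x i) * ∑ j, χ (g i * (g j)⁻¹) * x j) ∈ {z : ℂ | 0 ≤ z}})) := by
    ext χ
    simp only [Set.mem_setOf_eq, Set.mem_inter_iff, Set.mem_iInter]
    constructor
    · rintro ⟨hc, h1, hp⟩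
      refine ⟨fun a b => hc a b, h1, fun n g => ⟨fun i j => ?_, fun x => ?_⟩⟩
      · exact (hp n g).1.apply j i
      · have := (hp n g).dotProduct_mulVec_nonneg x
        simpa [dotProduct, Matrix.mulVec, Finset.mul_sum] using this
    · rintro ⟨hc, h1, hp⟩
      refine ⟨hc, h1, fun n g => Matrix.PosSemidef.of_dotProduct_mulVec_nonneg ?_ fun x => ?_⟩
      · exact Matrix.IsHermitian.ext fun i j => by simpa using (hp n g).1 j i
      · have := (hp n g).2 x
        simpa [dotProduct, Matrix.mulVec, Finset.mul_sum] using this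
  rw [this]
  refine IsClosed.inter ?_ (IsClosed.inter ?_ ?_)
  · exact isClosed_iInter fun a => isClosed_iInter fun b =>
      isClosed_eq (continuous_apply _) (continuous_apply _)
  · exact isClosed_eq (continuous_apply _) continuous_const
  · refine isClosed_iInter fun n => isClosed_iInter fun g => IsClosed.inter ?_ ?_
    · refine isClosed_iInter fun i => isClosed_iInter fun j => ?_
      have c1 : Continuous fun χ : G → ℂ => starRingEnd ℂ (χ (g i * (g j)⁻¹)) :=
        Continuous.comp Complex.continuous_conj (continuous_apply (g i * (g j)⁻¹))
      have c2 : Continuous fun χ : G → ℂ => χ (g j * (g i)⁻¹) := continuous_apply (g j * (g i)⁻¹)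
      exact isClosed_eq c1 c2
    · refine isClosed_iInter fun x => IsClosed.preimage ?_ isClosed_nonnegC
      refine continuous_finset_sum _ fun i _ => Continuous.mul continuous_const ?_
      exact continuous_finset_sum _ fun j _ => Continuous.mul (continuous_apply _) continuous_const

lemma convex_K : Convex ℝ {χ : G → ℂ | IsCharacter χ} := by
  rintro χ₁ h1 χ₂ h2 a b ha hb hab
  refine ⟨fun x y => ?_, ?_, fun n g => ?_⟩
  · simp only [Pi.add_apply, Pi.smul_apply, Complex.real_smul, h1.1 x y, h2.1 x y]
  · simp only [Pi.add_apply, Pi.smul_apply, Complex.real_smul, h1.2.1, h2.2.1]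
    rw [mul_one, mul_one]
    exact_mod_cast congrArg (fun r : ℝ => (r : ℂ)) hab
  · have P1 := h1.2.2 n g
    have P2 := h2.2.2 n g
    have hM : (Matrix.of fun i j : Fin n => (a • χ₁ + b • χ₂) (g i * (g j)⁻¹)) =
        (a : ℂ) • (Matrix.of fun i j : Fin n => χ₁ (g i * (g j)⁻¹)) +
        (b : ℂ) • (Matrix.of fun i j : Fin n => χ₂ (g i * (g j)⁻¹)) := by
      ext i j
      simp [Complex.real_smul]
    rw [hM]
    refine Matrix.PosSemidef.of_dotProduct_mulVec_nonneg ?_ ?_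
    · refine Matrix.IsHermitian.ext fun i j => ?_
      have e1 := P1.1.apply i j
      have e2 := P2.1.apply i j
      simp only [Matrix.add_apply, Matrix.smul_apply, smul_eq_mul, star_add, star_mul',
        Complex.star_def, Complex.conj_ofReal] at *
      rw [e1, e2]
    · intro x
      rw [Matrix.add_mulVec, Matrix.smul_mulVec, Matrix.smul_mulVec,
        dotProduct_add, dotProduct_smul, dotProduct_smul]
      have ha' : (0:ℂ) ≤ (a : ℂ) := Complex.zero_le_real.mpr ha
      have hb' : (0:ℂ) ≤ (b : ℂ) := Complex.zero_le_real.mpr hb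
      have := add_nonneg (mul_nonneg ha' (P1.dotProduct_mulVec_nonneg x)) (mul_nonneg hb' (P2.dotProduct_mulVec_nonneg x))
      simpa [smul_eq_mul] using this

lemma extreme_indecomposable {χ : G → ℂ}
    (hχ : χ ∈ Set.extremePoints ℝ {χ : G → ℂ | IsCharacter χ}) :
    IsIndecomposableCharacter χ := by
  rw [mem_extremePoints] at hχ
  obtain ⟨hK, hext⟩ := hχ
  refine ⟨hK, ?_⟩
  rintro ⟨α, χ₁, χ₂, h0, h1, hc1, hc2, hne, heq⟩
  have hseg : χ ∈ openSegment ℝ χ₁ χ₂ := by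
    refine ⟨α, 1 - α, h0, by linarith, by ring, ?_⟩
    funext g
    simp only [Pi.add_apply, Pi.smul_apply, Complex.real_smul, heq]
  obtain ⟨e1, e2⟩ := hext χ₁ hc1 χ₂ hc2 hseg
  exact hne (e1.trans e2.symm)

end K



open Classical in
lemma isCharacter_finiteIndex {G : Type*} [Group G] (N : Subgroup G) [N.Normal]
    (h2 : 2 ≤ N.index) :
    IsCharacter (fun x : G =>
      (((if x ∈ N then 1 else -(1/((N.index : ℝ) - 1))) : ℝ) : ℂ)) := by
  haveI : Finite (G ⧸ N) := by
    have : Nat.card (G ⧸ N) ≠ 0 := by rw [← Subgroup.index_eq_card]; omega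
    exact (Nat.card_ne_zero.mp this).2
  haveI := Fintype.ofFinite (G ⧸ N)
  set r : ℝ := (N.index : ℝ) with hr
  have hr2 : (2:ℝ) ≤ r := by rw [hr]; exact_mod_cast h2
  have hrpos : 0 < r := by linarith
  have hr1 : 0 < r - 1 := by linarith
  set u : ℝ := Real.sqrt r with hu
  set w : ℝ := Real.sqrt (r - 1) with hw
  have hu2 : u ^ 2 = r := Real.sq_sqrt hrpos.le
  have hw2 : w ^ 2 = r - 1 := Real.sq_sqrt hr1.le
  have hupos : 0 < u := Real.sqrt_pos.mpr hrpos
  have hwpos : 0 < w := Real.sqrt_pos.mpr hr1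
  have hcard : (Fintype.card (G ⧸ N) : ℝ) = r := by
    rw [hr, Subgroup.index_eq_card, Nat.card_eq_fintype_card]
  refine ⟨fun a b => ?_, by simp [Subgroup.one_mem], fun n g => ?_⟩
  · have : a * b ∈ N ↔ b * a ∈ N :=
      ⟨fun h => Subgroup.Normal.mem_comm ‹N.Normal› h,
       fun h => Subgroup.Normal.mem_comm ‹N.Normal› h⟩
    simp only [this]
  · set A : Matrix (G ⧸ N) (Fin n) ℂ := Matrix.of fun t i =>
      ((((if ((g i : G) : G ⧸ N) = t then u else 0) - 1/u)/w : ℝ) : ℂ) with hA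
    have key : (Matrix.of fun i j : Fin n =>
        (((if g i * (g j)⁻¹ ∈ N then 1 else -(1/(r - 1))) : ℝ) : ℂ)) = Aᴴ * A := by
      ext i j
      rw [Matrix.mul_apply]
      simp only [Matrix.of_apply, Matrix.conjTranspose_apply, hA, Complex.star_def,
        Complex.conj_ofReal, ← Complex.ofReal_mul, ← Complex.ofReal_sum]
      rw [Complex.ofReal_inj]
      have hmem : (g i * (g j)⁻¹ ∈ N) ↔ (((g i : G) : G ⧸ N) = ((g j : G) : G ⧸ N)) := by
        rw [eq_comm, QuotientGroup.eq]
        exact ⟨fun h => Subgroup.Normal.mem_comm ‹N.Normal› h,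
          fun h => Subgroup.Normal.mem_comm ‹N.Normal› h⟩
      simp only [hmem]
      set ci : G ⧸ N := ((g i : G) : G ⧸ N)
      set cj : G ⧸ N := ((g j : G) : G ⧸ N)
      have expand : ∀ t : G ⧸ N,
          (((if ci = t then u else 0) - 1/u)/w) * (((if cj = t then u else 0) - 1/u)/w)
          = ((if ci = t then u else 0) * (if cj = t then u else 0)
            - (1/u) * (if ci = t then u else 0) - (1/u) * (if cj = t then u else 0)
            + (1/u)^2) / w^2 := by
        intro t
        rw [div_mul_div_comm, show w*w = w^2 by ring]
        congr 1
        ring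
      rw [Finset.sum_congr rfl (fun t _ => expand t)]
      rw [← Finset.sum_div]
      have e1 : ∑ t : G ⧸ N, ((if ci = t then u else 0) * (if cj = t then u else 0)
            - (1/u) * (if ci = t then u else 0) - (1/u) * (if cj = t then u else 0)
            + (1/u)^2)
          = (if ci = cj then u^2 else 0) - (1/u)*u - (1/u)*u
            + (Fintype.card (G ⧸ N) : ℝ) * (1/u)^2 := by
        rw [Finset.sum_add_distrib, Finset.sum_sub_distrib, Finset.sum_sub_distrib]
        congr 1
        · congr 1
          · congr 1
            · have : ∀ t : G ⧸ N, (if ci = t then u else 0) * (if cj = t then u else 0)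
                  = if ci = t then (if cj = t then u^2 else 0) else 0 := by
                intro t; split_ifs <;> ring
              rw [Finset.sum_congr rfl (fun t _ => this t), Finset.sum_ite_eq]
              simp [eq_comm]
            · rw [← Finset.mul_sum, Finset.sum_ite_eq]
              simp
          · rw [← Finset.mul_sum, Finset.sum_ite_eq]
            simp
        · simp [Finset.sum_const, nsmul_eq_mul]
      rw [e1, hcard]
      have hune : u ≠ 0 := ne_of_gt hupos
      have : (1/u) * u = 1 := by field_simp
      rw [this]
      have hs2 : r * (1/u)^2 = 1 := by
        rw [div_pow, one_pow, ← hu2]; field_simp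
      rw [hu2, hs2, hw2]
      split_ifs with hq
      · field_simp; ring
      · field_simp; ring
    rw [key]
    exact Matrix.posSemidef_conjTranspose_mul_self A

/-- if a countable group `G` has a proper normal subgroup `H` with `G/H`
virtually abelian, then `G` admits an indecomposable character taking a value that is not a
nonnegative real number. -/
theorem stmt_3 {G : Type*} [Group G] [Countable G] (H : Subgroup G) [H.Normal]
    (hH : H ≠ ⊤)
    (hva : ∃ A : Subgroup (G ⧸ H), A.index ≠ 0 ∧ ∀ a b : A, a * b = b * a) :
    ∃ χ : G → ℂ, IsIndecomposableCharacter χ ∧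
      ∃ g : G, ¬ ∃ r : ℝ, 0 ≤ r ∧ χ g = (r : ℂ) := by
  classical
  set K : Set (G → ℂ) := {χ | IsCharacter χ} with hK
  -- Step 1: there exists a (possibly decomposable) character with a bad value
  have step1 : ∃ χ₀, χ₀ ∈ K ∧ ∃ g₀ : G, ¬ ∃ r : ℝ, 0 ≤ r ∧ χ₀ g₀ = (r : ℂ) := by
    obtain ⟨A, hAidx, hAcomm⟩ := hva
    obtain ⟨g₀, hg₀⟩ : ∃ g₀ : G, g₀ ∉ H := by
      by_contra hcon
      push_neg at hcon
      exact hH ((Subgroup.eq_top_iff' H).mpr hcon)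
    by_cases hA : A = ⊤
    · -- quotient is abelian: use a circle-valued homomorphism
      have hQcomm : ∀ a b : G ⧸ H, a * b = b * a := by
        intro a b
        have h := hAcomm ⟨a, hA ▸ Subgroup.mem_top a⟩ ⟨b, hA ▸ Subgroup.mem_top b⟩
        have := congrArg Subtype.val h
        simpa using this
      letI : CommGroup (G ⧸ H) := { (inferInstance : Group (G ⧸ H)) with mul_comm := hQcomm }
      have hq0 : Additive.ofMul ((g₀ : G ⧸ H)) ≠ (0 : Additive (G ⧸ H)) := by
        intro h
        apply hg₀
        have : ((g₀ : G ⧸ H)) = (1 : G ⧸ H) := h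
        exact (QuotientGroup.eq_one_iff g₀).mp this
      obtain ⟨c, hc⟩ := CharacterModule.exists_character_apply_ne_zero_of_ne_zero hq0
      set φ : G →* G ⧸ H := QuotientGroup.mk' H with hφ
      have hφg₀ : φ g₀ = ((g₀ : G ⧸ H)) := rfl
      refine ⟨fun x => circChar (c (Additive.ofMul (φ x))), ?_, g₀, ?_⟩
      · show IsCharacter fun x => circChar (c (Additive.ofMul (φ x)))
        refine isCharacter_of_hom (fun x => circChar (c (Additive.ofMul (φ x))))
          (fun a b => ?_) ?_ (fun a => ?_)
        · beta_reduce
          rw [map_mul φ]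
          rw [show Additive.ofMul (φ a * φ b)
              = Additive.ofMul (φ a) + Additive.ofMul (φ b) from rfl]
          rw [map_add, circChar_add]
        · beta_reduce
          rw [map_one φ]
          rw [show Additive.ofMul (1 : G ⧸ H) = (0 : Additive (G ⧸ H)) from rfl]
          rw [map_zero, circChar_zero]
        · beta_reduce
          rw [map_inv φ]
          rw [show Additive.ofMul ((φ a)⁻¹) = -Additive.ofMul (φ a) from rfl]
          rw [map_neg, circChar_neg]
      · rintro ⟨r, hr0, hr⟩
        have hr' : circChar (c (Additive.ofMul ((g₀ : G ⧸ H)))) = (r : ℂ) := hr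
        have hne1 : circChar (c (Additive.ofMul ((g₀ : G ⧸ H)))) ≠ 1 := circChar_ne_one hc
        have habs : ‖(circChar (c (Additive.ofMul ((g₀ : G ⧸ H)))))‖ = 1 :=
          circChar_norm _
        rw [hr'] at habs hne1
        rw [Complex.norm_real, Real.norm_of_nonneg hr0] at habs
        exact hne1 (by rw [habs]; norm_num)
    · -- proper finite-index subgroup: use the two-valued character
      haveI : A.FiniteIndex := ⟨hAidx⟩
      have hNqt : A.normalCore ≠ ⊤ := by
        intro h
        exact hA (top_le_iff.mp (h ▸ Subgroup.normalCore_le A))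
      set N : Subgroup G := A.normalCore.comap (QuotientGroup.mk' H) with hN
      haveI : N.Normal := Subgroup.Normal.comap (Subgroup.normalCore_normal A) _
      have hNidx : N.index = A.normalCore.index :=
        Subgroup.index_comap_of_surjective _ (QuotientGroup.mk'_surjective H)
      have hNtop : N ≠ ⊤ := by
        intro h
        apply hNqt
        rw [eq_top_iff]
        intro q _
        obtain ⟨x, rfl⟩ := QuotientGroup.mk'_surjective H q
        have : x ∈ N := h ▸ Subgroup.mem_top x
        exact this
      have hN2 : 2 ≤ N.index := by
        have h0 : N.index ≠ 0 := by
          rw [hNidx]; exact Subgroup.FiniteIndex.index_ne_zero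
        have h1 : N.index ≠ 1 := by
          intro h; exact hNtop (Subgroup.index_eq_one.mp h)
        omega
      obtain ⟨x₀, hx₀⟩ : ∃ x₀ : G, x₀ ∉ N := by
        by_contra hcon
        push_neg at hcon
        exact hNtop ((Subgroup.eq_top_iff' N).mpr hcon)
      refine ⟨fun x : G => (((if x ∈ N then 1 else -(1/((N.index : ℝ) - 1))) : ℝ) : ℂ),
        isCharacter_finiteIndex N hN2, x₀, ?_⟩
      rintro ⟨r, hr0, hr⟩
      simp only [hx₀, if_false] at hr
      have : -(1/((N.index : ℝ) - 1)) = r := by exact_mod_cast hr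
      have hpos : 0 < 1/((N.index : ℝ) - 1) := by
        apply div_pos one_pos
        have : (2:ℝ) ≤ (N.index : ℝ) := by exact_mod_cast hN2
        linarith
      linarith [this, hpos, hr0]
  -- Step 2: Krein–Milman
  have hKclosed : IsClosed K := isClosed_K
  have hKconv : Convex ℝ K := convex_K
  have hKcomp : IsCompact K := by
    apply IsCompact.of_isClosed_subset
      (isCompact_univ_pi fun _ : G => isCompact_closedBall (0:ℂ) 1) hKclosed
    intro χ hχ
    rw [Set.mem_univ_pi]
    intro g
    rw [Metric.mem_closedBall, dist_zero_right]
    exact char_bound hχ g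
  have hKM := closure_convexHull_extremePoints hKcomp hKconv
  obtain ⟨χ₀, hχ₀K, g₀, hbadv⟩ := step1
  have hextbad : ∃ χ ∈ Set.extremePoints ℝ K, ¬ ∃ r : ℝ, 0 ≤ r ∧ χ g₀ = (r : ℂ) := by
    by_contra hcon
    push_neg at hcon
    have hsub : Set.extremePoints ℝ K ⊆ {f : G → ℂ | 0 ≤ f g₀} := by
      intro χ hχ
      obtain ⟨r, hr0, hr⟩ := hcon χ hχ
      simp only [Set.mem_setOf_eq, hr]
      exact Complex.zero_le_real.mpr hr0
    have hSclosed : IsClosed {f : G → ℂ | 0 ≤ f g₀} := by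
      have heq : {f : G → ℂ | 0 ≤ f g₀} = (fun f : G → ℂ => f g₀) ⁻¹' {z : ℂ | 0 ≤ z} := rfl
      rw [heq]
      exact IsClosed.preimage (continuous_apply g₀) isClosed_nonnegC
    have hSconv : Convex ℝ {f : G → ℂ | 0 ≤ f g₀} := by
      intro x hx y hy a b ha hb hab
      simp only [Set.mem_setOf_eq, Pi.add_apply, Pi.smul_apply, Complex.real_smul] at *
      exact add_nonneg (mul_nonneg (Complex.zero_le_real.mpr ha) hx)
        (mul_nonneg (Complex.zero_le_real.mpr hb) hy)
    have hKS : K ⊆ {f : G → ℂ | 0 ≤ f g₀} := by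
      rw [← hKM]
      exact closure_minimal (convexHull_min hsub hSconv) hSclosed
    have h0 : 0 ≤ χ₀ g₀ := hKS hχ₀K
    apply hbadv
    refine ⟨(χ₀ g₀).re, ?_, ?_⟩
    · have := (Complex.le_def.mp h0).1
      simpa using this
    · have him := (Complex.le_def.mp h0).2
      apply Complex.ext
      · simp
      · simp [← him]
  obtain ⟨χ, hχext, hbad⟩ := hextbad
  exact ⟨χ, extreme_indecomposable hχext, g₀, hbad⟩
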